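/- For any countable set Y ⊆ ω₂, the set of conditions q ∈ 𝔹(π⃗, f) such that Y ⊆ dom(h_q) is dense and open in 𝔹(π⃗, f): it is downward closed, and every condition p ∈ 𝔹(π⃗, f) has an extension q ≤ p with Y ⊆ dom(h_q). -/

import Mathlib

noncomputable section

abbrev Ordi : Type 1 := Ordinal.{0}

/-- The ordinal `ω₁`. -/
def w1 : Ordi := (Cardinal.aleph 1).ord

/-- The ordinal `ω₂`. -/
def w2 : Ordi := (Cardinal.aleph 2).ord

/-- `S²₁`: the set of ordinals below `ω₂` of cofinality `ω₁`. -/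
def S21 : Set Ordi := {α | α < w2 ∧ Ordinal.cof α = Cardinal.aleph 1}

open Set Cardinal Ordinal

lemma cof_w1 : w1.cof = Cardinal.aleph 1 := Cardinal.isRegular_aleph_one.cof_eq

lemma aleph0_lt_cof_w1 : ℵ₀ < w1.cof := by
  rw [cof_w1]; exact aleph0_lt_aleph_one

lemma aleph0_lt_cof_w2 : ℵ₀ < w2.cof := by
  have : (Cardinal.aleph 2).IsRegular := by
    have : Cardinal.aleph 2 = Order.succ (Cardinal.aleph 1) := by
      rw [show (2 : Ordinal) = Order.succ 1 by rw [← Ordinal.add_one_eq_succ, one_add_one_eq_two], Cardinal.aleph_succ]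
    rw [this]
    exact Cardinal.isRegular_succ (Cardinal.aleph0_le_aleph 1)
  rw [show w2.cof = Cardinal.aleph 2 from this.cof_eq]
  calc ℵ₀ < ℵ₁ := aleph0_lt_aleph_one
    _ ≤ Cardinal.aleph 2 := Cardinal.aleph_le_aleph.2 (by norm_num)

lemma exists_strict_bound {o : Ordi} (ho : ℵ₀ < o.cof) {S : Set Ordi}
    (hS : S.Countable) (hsub : S ⊆ Set.Iio o) : ∃ δ < o, ∀ x ∈ S, x < δ := by
  have holim : Order.IsSuccLimit o := Ordinal.aleph0_le_cof.1 ho.le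
  rcases S.eq_empty_or_nonempty with rfl | hne
  · exact ⟨0, holim.pos, by simp⟩
  obtain ⟨g, rfl⟩ := hS.exists_eq_range hne
  have hsup : iSup g < o := by
    apply Ordinal.iSup_lt_ord _ (fun n => hsub (mem_range_self n))
    rwa [Cardinal.mk_nat]
  refine ⟨Order.succ (iSup g), holim.succ_lt hsup, ?_⟩
  rintro x ⟨n, rfl⟩
  exact (Ordinal.le_iSup g n).trans_lt (Order.lt_succ _)

lemma exists_avoid {o : Ordi} (ho : ℵ₀ < o.cof) {α : Ordi} (hα : α < o) {S : Set Ordi}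
    (hS : S.Countable) : ∃ v, α < v ∧ v < o ∧ v ∉ S := by
  have holim : Order.IsSuccLimit o := Ordinal.aleph0_le_cof.1 ho.le
  by_contra hcon
  push_neg at hcon
  have hsub : Set.Ioo α o ⊆ S := fun v hv => hcon v hv.1 hv.2
  obtain ⟨δ, hδo, hδ⟩ := exists_strict_bound ho (hS.mono hsub)
    (fun v hv => (Set.mem_Ioo.1 hv).2)
  have hx : Order.succ (max δ α) ∈ Set.Ioo α o :=
    ⟨(le_max_right δ α).trans_lt (Order.lt_succ _),
      holim.succ_lt (max_lt hδo hα)⟩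
  exact absurd (hδ _ hx) (not_lt.2 ((le_max_left δ α).trans (Order.le_succ _)))

lemma countable_Iio_of_lt_w1 {δ : Ordi} (h : δ < w1) : (Set.Iio δ).Countable := by
  rw [Cardinal.countable_iff_lt_aleph_one, Ordinal.mk_Iio_ordinal]
  exact Cardinal.lift_lt_aleph_one.2 (Cardinal.lt_ord.1 h)


lemma w1_le_of_S21 {β : Ordi} (h : β ∈ S21) : w1 ≤ β := by
  have := Ordinal.ord_cof_le β
  rwa [h.2] at this

lemma aleph0_lt_cof_of_S21 {β : Ordi} (h : β ∈ S21) : ℵ₀ < β.cof := by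
  rw [h.2]; exact aleph0_lt_aleph_one

lemma exists_value (pi : Ordi → Ordi → Ordi) (f : Ordi → Ordi)
    (hpi : ∀ β, w1 ≤ β → β < w2 → Set.BijOn (pi β) (Set.Iio β) (Set.Iio w1))
    (hf_maps : ∀ i < w1, f i < w1)
    (I : Set Ordi) (hI_ct : I.Countable) (hI_sub : I ⊆ S21)
    (α : Ordi) (hα : α < w2)
    (B : Set Ordi) (hB : B.Countable) :
    ∃ v, α < v ∧ v < w2 ∧ v ∉ B ∧
      (∀ β ∈ I, α < β → v < β) ∧
      (∀ β ∈ I, α < β → ∀ x ∈ insert α B, x < β →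
        pi β x < pi β v ∧ f (pi β x) < pi β v) := by
  classical
  -- bounds δ β for each relevant β
  have claim : ∀ β ∈ I, α < β → ∃ δ, δ < w1 ∧
      ∀ x ∈ insert α B, x < β → max (pi β x) (f (pi β x)) < δ := by
    intro β hβI hαβ
    have hβ21 := hI_sub hβI
    have hw1β : w1 ≤ β := w1_le_of_S21 hβ21
    have hβw2 : β < w2 := hβ21.1
    have hbij := hpi β hw1β hβw2
    have hset : ((fun x => max (pi β x) (f (pi β x))) '' (insert α B ∩ Set.Iio β)).Countable :=
      (((hB.insert α).mono (Set.inter_subset_left)).image _)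
    have hsub : ((fun x => max (pi β x) (f (pi β x))) '' (insert α B ∩ Set.Iio β)) ⊆ Set.Iio w1 := by
      rintro _ ⟨x, ⟨hx1, hx2⟩, rfl⟩
      have h1 : pi β x < w1 := hbij.mapsTo hx2
      exact max_lt h1 (hf_maps _ h1)
    obtain ⟨δ, hδw1, hδ⟩ := exists_strict_bound aleph0_lt_cof_w1 hset hsub
    exact ⟨δ, hδw1, fun x hx hxβ => hδ _ (Set.mem_image_of_mem _ ⟨hx, hxβ⟩)⟩
  choose! δ hδw1 hδbd using claim
  -- the countable bad set
  set T : Set Ordi := {β ∈ I | α < β} with hT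
  set Bad : Set Ordi := B ∪ ⋃ β ∈ T, {z | z < β ∧ pi β z < δ β} with hBad
  have hT_ct : T.Countable := hI_ct.mono (fun b hb => hb.1)
  have hBad_ct : Bad.Countable := by
    refine hB.union (hT_ct.biUnion fun β hβ => ?_)
    have hβ21 := hI_sub hβ.1
    have hbij := hpi β (w1_le_of_S21 hβ21) hβ21.1
    refine Set.MapsTo.countable_of_injOn (t := Set.Iio (δ β))
      (fun z hz => hz.2) (hbij.injOn.mono (fun z hz => hz.1)) ?_
    exact countable_Iio_of_lt_w1 (hδw1 β hβ.1 hβ.2)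
  by_cases hTne : T.Nonempty
  · -- least element of T
    obtain ⟨β₀, hβ₀T, hmin⟩ := wellFounded_lt.has_min T hTne
    have hβ₀21 := hI_sub hβ₀T.1
    obtain ⟨v, hv1, hv2, hv3⟩ := exists_avoid (aleph0_lt_cof_of_S21 hβ₀21) hβ₀T.2 hBad_ct
    have hvltβ : ∀ β ∈ I, α < β → v < β := by
      intro β hβI hαβ
      exact hv2.trans_le (not_lt.1 (hmin β ⟨hβI, hαβ⟩))
    refine ⟨v, hv1, hv2.trans hβ₀21.1, fun hvB => hv3 (Or.inl hvB), hvltβ, ?_⟩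
    intro β hβI hαβ x hx hxβ
    have hvβ : v < β := hvltβ β hβI hαβ
    have hvgood : ¬ (v < β ∧ pi β v < δ β) := by
      intro hbad
      exact hv3 (Or.inr (Set.mem_biUnion ⟨hβI, hαβ⟩ hbad))
    have hpiv : δ β ≤ pi β v := by
      by_contra hlt
      exact hvgood ⟨hvβ, not_le.1 hlt⟩
    have hmax := hδbd β hβI hαβ x hx hxβ
    exact ⟨(le_max_left _ _).trans_lt (hmax.trans_le hpiv),
      (le_max_right _ _).trans_lt (hmax.trans_le hpiv)⟩
  · obtain ⟨v, hv1, hv2, hv3⟩ := exists_avoid aleph0_lt_cof_w2 hα hB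
    refine ⟨v, hv1, hv2, hv3, ?_, ?_⟩
    · intro β hβI hαβ; exact absurd ⟨hβI, hαβ⟩ (fun h => hTne ⟨β, h⟩)
    · intro β hβI hαβ; exact absurd ⟨hβI, hαβ⟩ (fun h => hTne ⟨β, h⟩)

/-- A condition in the poset `𝔹(π⃗, f)`: a pair `(h, I)` where `h` is an
injective partial function on `ω₂` (represented by a total function `h`
together with its domain `dom`) with countable domain, fixing no point of its
domain, and `I` is a countable subset of `S²₁` each of whose members is closed
under `h` and `h⁻¹`.  (Membership in the poset does not depend on `π⃗` or `f`.) -/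
structure BCond where
  dom : Set Ordi
  h : Ordi → Ordi
  I : Set Ordi
  dom_countable : dom.Countable
  dom_subset : dom ⊆ Set.Iio w2
  mapsTo : ∀ α ∈ dom, h α < w2
  injOn : Set.InjOn h dom
  ne_self : ∀ α ∈ dom, h α ≠ α
  I_countable : I.Countable
  I_subset : I ⊆ S21
  closed : ∀ β ∈ I, ∀ α ∈ dom, (α < β → h α < β) ∧ (h α < β → α < β)

/-- The order on `𝔹(π⃗, f)`: `q ≤ p` iff `h_p ⊆ h_q`, `I_p ⊆ I_q`, and the
oscillation requirements (c)(i) and (c)(ii) hold for every new point of the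
domain below a member of `I_p`. -/
def BLe (pi : Ordi → Ordi → Ordi) (f : Ordi → Ordi) (q p : BCond) : Prop :=
  (p.dom ⊆ q.dom ∧ ∀ α ∈ p.dom, q.h α = p.h α) ∧
  p.I ⊆ q.I ∧
  ∀ α ∈ q.dom, α ∉ p.dom → ∀ β ∈ p.I, α < β →
    (f (min (pi β α) (pi β (q.h α))) < max (pi β α) (pi β (q.h α))) ∧
    (∀ γ ∈ q.dom, γ < β → γ ≠ α →
      f (min (pi β (q.h γ)) (pi β (q.h α))) < max (pi β (q.h γ)) (pi β (q.h α)))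

/-- For any countable `Y ⊆ ω₂`, the set of conditions `q` with `Y ⊆ dom(h_q)`
is dense and open in `𝔹(π⃗, f)`: it is downward closed, and every condition
has an extension whose domain contains `Y`. -/
theorem BCond_dense_open_dom (pi : Ordi → Ordi → Ordi) (f : Ordi → Ordi)
    (hpi : ∀ β, w1 ≤ β → β < w2 → Set.BijOn (pi β) (Set.Iio β) (Set.Iio w1))
    (hf_maps : ∀ i < w1, f i < w1) (hf_inj : Set.InjOn f (Set.Iio w1))
    (Y : Set Ordi) (hY_ctble : Y.Countable) (hY_sub : Y ⊆ Set.Iio w2) :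
    (∀ p q : BCond, Y ⊆ p.dom → BLe pi f q p → Y ⊆ q.dom) ∧
    (∀ p : BCond, ∃ q : BCond, BLe pi f q p ∧ Y ⊆ q.dom) := by
  classical
  constructor
  · intro p q hYp hle
    exact hYp.trans hle.1.1
  intro p
  set N : Set Ordi := Y \ p.dom with hNdef
  by_cases hNne : N.Nonempty
  · obtain ⟨e, he⟩ := (hY_ctble.mono Set.diff_subset).exists_eq_range hNne
    have heN : ∀ n, e n ∈ N := by
      intro n
      rw [hNdef, he]
      exact Set.mem_range_self n
    have hew2 : ∀ n, e n < w2 := fun n => hY_sub (heN n).1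
    have EX : ∀ (n : ℕ) (B : Set Ordi), B.Countable →
        ∃ v, e n < v ∧ v < w2 ∧ v ∉ B ∧ (∀ β ∈ p.I, e n < β → v < β) ∧
          (∀ β ∈ p.I, e n < β → ∀ x ∈ insert (e n) B, x < β →
            pi β x < pi β v ∧ f (pi β x) < pi β v) :=
      fun n B hB => exists_value pi f hpi hf_maps p.I p.I_countable p.I_subset
        (e n) (hew2 n) B hB
    have hBct : ∀ (prev : ℕ → Ordi) (n : ℕ),
        (p.h '' p.dom ∪ prev '' Set.Iio n).Countable :=
      fun prev n => (p.dom_countable.image _).union ((Set.to_countable _).image _)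
    let step : ℕ → (ℕ → Ordi) → Ordi := fun n prev =>
      Classical.choose (EX n (p.h '' p.dom ∪ prev '' Set.Iio n) (hBct prev n))
    let G : ℕ → ℕ → Ordi := fun n =>
      Nat.rec (fun _ => (0 : Ordi)) (fun k gk => Function.update gk k (step k gk)) n
    let F : ℕ → Ordi := fun n => G (n + 1) n
    have hGF : ∀ n k, k < n → G n k = F k := by
      intro n
      induction n with
      | zero => intro k hk; omega
      | succ m ih =>
        intro k hk
        rcases Nat.lt_succ_iff_lt_or_eq.1 hk with hk' | rfl
        · have h1 : G (m + 1) k = G m k := Function.update_of_ne (by omega) _ _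
          rw [h1, ih k hk']
        · rfl
    have himg : ∀ n, G n '' Set.Iio n = F '' Set.Iio n := fun n =>
      Set.image_congr (fun k hk => hGF n k hk)
    have hFspec : ∀ n, e n < F n ∧ F n < w2 ∧
        F n ∉ (p.h '' p.dom ∪ F '' Set.Iio n) ∧
        (∀ β ∈ p.I, e n < β → F n < β) ∧
        (∀ β ∈ p.I, e n < β → ∀ x ∈ insert (e n) (p.h '' p.dom ∪ F '' Set.Iio n),
          x < β → pi β x < pi β (F n) ∧ f (pi β x) < pi β (F n)) := by
      intro n
      have h1 : F n = Classical.choose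
          (EX n (p.h '' p.dom ∪ G n '' Set.Iio n) (hBct (G n) n)) := by
        show Function.update (G n) n (step n (G n)) n = _
        rw [Function.update_self]
      have h2 := Classical.choose_spec (EX n (p.h '' p.dom ∪ G n '' Set.Iio n) (hBct (G n) n))
      rw [← h1, himg n] at h2
      exact h2
    have hidx : ∀ a ∈ N, ∃ n, e n = a := by
      intro a ha
      rw [hNdef, he] at ha
      exact ha
    choose! idx hidxe using hidx
    have hva : ∀ a ∈ N, a < F (idx a) ∧ F (idx a) < w2 ∧
        F (idx a) ∉ (p.h '' p.dom ∪ F '' Set.Iio (idx a)) ∧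
        (∀ β ∈ p.I, a < β → F (idx a) < β) ∧
        (∀ β ∈ p.I, a < β → ∀ x ∈ insert a (p.h '' p.dom ∪ F '' Set.Iio (idx a)),
          x < β → pi β x < pi β (F (idx a)) ∧ f (pi β x) < pi β (F (idx a))) := by
      intro a ha
      have h := hFspec (idx a)
      rwa [hidxe a ha] at h
    have hFinj : ∀ a ∈ N, ∀ b ∈ N, a ≠ b → F (idx a) ≠ F (idx b) := by
      intro a ha b hb hab heq
      have hne : idx a ≠ idx b := by
        intro h
        exact hab (by rw [← hidxe a ha, h, hidxe b hb])
      rcases hne.lt_or_gt with h | h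
      · exact (hva b hb).2.2.1 (Or.inr ⟨idx a, h, heq⟩)
      · exact (hva a ha).2.2.1 (Or.inr ⟨idx b, h, heq.symm⟩)
    have hmemN : ∀ a, a ∈ p.dom ∪ Y → a ∉ N → a ∈ p.dom := by
      intro a ha hna
      rcases ha with h | h
      · exact h
      · by_contra h'
        exact hna ⟨h, h'⟩
    let qh : Ordi → Ordi := fun a => if a ∈ N then F (idx a) else p.h a
    have hqh_new : ∀ a ∈ N, qh a = F (idx a) := fun a ha => if_pos ha
    have hqh_old : ∀ a, a ∉ N → qh a = p.h a := fun a ha => if_neg ha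
    refine ⟨⟨p.dom ∪ Y, qh, p.I,
      p.dom_countable.union hY_ctble,
      Set.union_subset p.dom_subset hY_sub,
      ?_, ?_, ?_, p.I_countable, p.I_subset, ?_⟩, ⟨⟨Set.subset_union_left, ?_⟩,
      subset_rfl, ?_⟩, fun y hy => Or.inr hy⟩
    · -- mapsTo
      intro a ha
      by_cases h : a ∈ N
      · rw [hqh_new a h]; exact (hva a h).2.1
      · rw [hqh_old a h]; exact p.mapsTo a (hmemN a ha h)
    · -- injOn
      intro a ha b hb heq
      by_cases ha' : a ∈ N <;> by_cases hb' : b ∈ N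
      · by_contra hab
        rw [hqh_new a ha', hqh_new b hb'] at heq
        exact hFinj a ha' b hb' hab heq
      · rw [hqh_new a ha', hqh_old b hb'] at heq
        exact absurd (Or.inl ⟨b, hmemN b hb hb', heq.symm⟩) (hva a ha').2.2.1
      · rw [hqh_old a ha', hqh_new b hb'] at heq
        exact absurd (Or.inl ⟨a, hmemN a ha ha', heq⟩) (hva b hb').2.2.1
      · rw [hqh_old a ha', hqh_old b hb'] at heq
        exact p.injOn (hmemN a ha ha') (hmemN b hb hb') heq
    · -- ne_self
      intro a ha
      by_cases h : a ∈ N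
      · rw [hqh_new a h]; exact ne_of_gt (hva a h).1
      · rw [hqh_old a h]; exact p.ne_self a (hmemN a ha h)
    · -- closed
      intro β hβ a ha
      by_cases h : a ∈ N
      · rw [hqh_new a h]
        refine ⟨fun hab => (hva a h).2.2.2.1 β hβ hab, fun hvb => ?_⟩
        by_contra hnab
        exact absurd hvb (not_lt.2 ((not_lt.1 hnab).trans (hva a h).1.le))
      · rw [hqh_old a h]
        exact p.closed β hβ a (hmemN a ha h)
    · -- h extends
      intro a ha
      exact hqh_old a (fun hN => hN.2 ha)
    · -- condition (c)
      intro α hαdom hαp β hβ hαβ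
      have hαdom' : α ∈ p.dom ∪ Y := hαdom
      have hαN : α ∈ N := ⟨hαdom'.resolve_left hαp, hαp⟩
      constructor
      · have H := (hva α hαN).2.2.2.2 β hβ hαβ α (Set.mem_insert _ _) hαβ
        show f (min (pi β α) (pi β (qh α))) < max (pi β α) (pi β (qh α))
        rw [hqh_new α hαN, min_eq_left H.1.le, max_eq_right H.1.le]
        exact H.2
      · intro γ hγdom hγβ hγα
        show f (min (pi β (qh γ)) (pi β (qh α))) < max (pi β (qh γ)) (pi β (qh α))
        have hγdom' : γ ∈ p.dom ∪ Y := hγdom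
        by_cases hγN : γ ∈ N
        · have hne : idx γ ≠ idx α := by
            intro h
            exact hγα (by rw [← hidxe γ hγN, h, hidxe α hαN])
          rcases hne.lt_or_gt with hlt | hlt
          · have hxmem : F (idx γ) ∈ insert α (p.h '' p.dom ∪ F '' Set.Iio (idx α)) :=
              Set.mem_insert_iff.2 (Or.inr (Set.mem_union_right _ ⟨idx γ, hlt, rfl⟩))
            have hxβ : F (idx γ) < β := (hva γ hγN).2.2.2.1 β hβ hγβ
            have H := (hva α hαN).2.2.2.2 β hβ hαβ _ hxmem hxβ
            rw [hqh_new α hαN, hqh_new γ hγN, min_eq_left H.1.le, max_eq_right H.1.le]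
            exact H.2
          · have hxmem : F (idx α) ∈ insert γ (p.h '' p.dom ∪ F '' Set.Iio (idx γ)) :=
              Set.mem_insert_iff.2 (Or.inr (Set.mem_union_right _ ⟨idx α, hlt, rfl⟩))
            have hxβ : F (idx α) < β := (hva α hαN).2.2.2.1 β hβ hαβ
            have H := (hva γ hγN).2.2.2.2 β hβ hγβ _ hxmem hxβ
            rw [hqh_new α hαN, hqh_new γ hγN, min_eq_right H.1.le, max_eq_left H.1.le]
            exact H.2
        · have hγp : γ ∈ p.dom := hmemN γ hγdom' hγN
          have hxmem : p.h γ ∈ insert α (p.h '' p.dom ∪ F '' Set.Iio (idx α)) :=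
            Set.mem_insert_iff.2 (Or.inr (Set.mem_union_left _ ⟨γ, hγp, rfl⟩))
          have hxβ : p.h γ < β := (p.closed β hβ γ hγp).1 hγβ
          have H := (hva α hαN).2.2.2.2 β hβ hαβ _ hxmem hxβ
          rw [hqh_new α hαN, hqh_old γ hγN, min_eq_left H.1.le, max_eq_right H.1.le]
          exact H.2
  · refine ⟨p, ⟨⟨subset_rfl, fun _ _ => rfl⟩, subset_rfl, ?_⟩, ?_⟩
    · intro α hα hnα β hβ hαβ
      exact absurd hα hnα
    · intro y hy
      by_contra hyp
      exact hNne ⟨y, hy, hyp⟩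

end
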